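/- For any stationary distribution p of the lumped-chain rate matrix Q̂, the refined delay approximation t_i = Σ_{A ⊆ N, i∈A} p(A) r_{i,A}/((r_{i,A} − λ_i)λ_i) satisfies the Jensen bound t_i ≥ t'_i, where t'_i = 1/(Σ_{A ⊆ N, i∈A} p(A) (r_{i,A}/λ_i) · r_{i,A} − λ_i). -/

import Mathlib

open Finset

/-- The lumped-chain rate matrix `Q̂`: from state `A`, queue `i ∉ A` turns on at rate
`λ_i` (moving to `insert i A`), queue `i ∈ A` empties at rate `r_{i,A} − λ_i`
(moving to `A.erase i`), and the diagonal entry is minus the total outgoing rate. -/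
noncomputable def Qhat {n : ℕ} (lam : Fin n → ℝ) (r : Fin n → Finset (Fin n) → ℝ)
    (A B : Finset (Fin n)) : ℝ :=
  if A = B then -((∑ i ∈ Aᶜ, lam i) + ∑ i ∈ A, (r i A - lam i))
  else (∑ i ∈ Aᶜ, if B = insert i A then lam i else 0)
    + ∑ i ∈ A, if B = A.erase i then r i A - lam i else 0

/-- A stationary distribution of the lumped chain `Q̂`. -/
def IsStationaryLumped {n : ℕ} (lam : Fin n → ℝ) (r : Fin n → Finset (Fin n) → ℝ)
    (p : Finset (Fin n) → ℝ) : Prop :=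
  (∀ A, 0 ≤ p A ∧ p A ≤ 1) ∧ (∑ A : Finset (Fin n), p A) = 1 ∧
    ∀ B : Finset (Fin n), (∑ A : Finset (Fin n), p A * Qhat lam r A B) = 0

/-- The refined delay approximation
`t_i = Σ_{A ∋ i} p(A) r_{i,A} / ((r_{i,A} − λ_i) λ_i)`. -/
noncomputable def tApprox {n : ℕ} (lam : Fin n → ℝ) (r : Fin n → Finset (Fin n) → ℝ)
    (p : Finset (Fin n) → ℝ) (i : Fin n) : ℝ :=
  ∑ A ∈ Finset.univ.filter (fun A : Finset (Fin n) => i ∈ A),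
    p A * r i A / ((r i A - lam i) * lam i)

/-- The second-degree upper bound
`t̄_i = Σ_{Ā ⊆ N∖{i}} π̄_i(Ā) / (r_{i,Ā∪{i}} − λ_i)` with `p̄_j = λ_j / r_{j,N}`. -/
noncomputable def tUpper {n : ℕ} (lam : Fin n → ℝ) (r : Fin n → Finset (Fin n) → ℝ)
    (i : Fin n) : ℝ :=
  ∑ A ∈ (Finset.univ.erase i).powerset,
    ((∏ j ∈ A, lam j / r j Finset.univ) *
      ∏ l ∈ (Finset.univ.erase i) \ A, (1 - lam l / r l Finset.univ)) /
      (r i (insert i A) - lam i)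

/-- The second-degree lower bound
`t̲_i = 1 / (Σ_{A̲ ⊆ N∖{i}} π̲_i(A̲) r_{i,A̲∪{i}} − λ_i)` with `p̲_j = λ_j / r_{j,{j}}`. -/
noncomputable def tLower {n : ℕ} (lam : Fin n → ℝ) (r : Fin n → Finset (Fin n) → ℝ)
    (i : Fin n) : ℝ :=
  1 / ((∑ A ∈ (Finset.univ.erase i).powerset,
    ((∏ j ∈ A, lam j / r j {j}) *
      ∏ l ∈ (Finset.univ.erase i) \ A, (1 - lam l / r l {l})) *
      r i (insert i A)) - lam i)

lemma qhat_cut {n : ℕ} (lam : Fin n → ℝ) (r : Fin n → Finset (Fin n) → ℝ) (i : Fin n)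
    (A : Finset (Fin n)) :
    ∑ B ∈ univ.filter (fun B : Finset (Fin n) => i ∈ B), Qhat lam r A B
      = if i ∈ A then -(r i A - lam i) else lam i := by
  classical
  have hE : ∀ B, Qhat lam r A B =
      ((∑ j ∈ Aᶜ, if B = insert j A then lam j else 0)
        + ∑ j ∈ A, if B = A.erase j then r j A - lam j else 0)
      + (if B = A then -((∑ j ∈ Aᶜ, lam j) + ∑ j ∈ A, (r j A - lam j)) else 0) := by
    intro B
    by_cases h : A = B
    · subst h
      have h1 : (∑ j ∈ Aᶜ, if A = insert j A then lam j else 0) = 0 :=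
        Finset.sum_eq_zero fun j hj => by
          rw [if_neg]
          intro hAB
          exact (Finset.mem_compl.mp hj) (Finset.insert_eq_self.mp hAB.symm)
      have h2 : (∑ j ∈ A, if A = A.erase j then r j A - lam j else 0) = 0 :=
        Finset.sum_eq_zero fun j hj => by
          rw [if_neg]
          intro hAB
          exact (Finset.erase_eq_self.mp hAB.symm) hj
      simp [Qhat, h1, h2]
    · simp [Qhat, h, Ne.symm h]
  rw [Finset.sum_congr rfl fun B _ => hE B]
  rw [Finset.sum_add_distrib, Finset.sum_add_distrib, Finset.sum_comm, Finset.sum_comm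
    (s := univ.filter (fun B : Finset (Fin n) => i ∈ B)) (t := A)]
  have e1 : ∀ j ∈ Aᶜ, (∑ B ∈ univ.filter (fun B : Finset (Fin n) => i ∈ B),
      if B = insert j A then lam j else 0) = if i ∈ insert j A then lam j else 0 := by
    intro j _
    rw [Finset.sum_ite_eq' (univ.filter (fun B : Finset (Fin n) => i ∈ B)) (insert j A)
      (fun _ => lam j)]
    simp
  have e2 : ∀ j ∈ A, (∑ B ∈ univ.filter (fun B : Finset (Fin n) => i ∈ B),
      if B = A.erase j then r j A - lam j else 0) = if i ∈ A.erase j then r j A - lam j else 0 := by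
    intro j _
    rw [Finset.sum_ite_eq' (univ.filter (fun B : Finset (Fin n) => i ∈ B)) (A.erase j)
      (fun _ => r j A - lam j)]
    simp
  rw [Finset.sum_congr rfl e1, Finset.sum_congr rfl e2,
    Finset.sum_ite_eq' (univ.filter (fun B : Finset (Fin n) => i ∈ B)) A
      (fun _ => -((∑ j ∈ Aᶜ, lam j) + ∑ j ∈ A, (r j A - lam j)))]
  simp only [Finset.mem_filter, Finset.mem_univ, true_and]
  by_cases hi : i ∈ A
  · have f1 : ∀ j ∈ Aᶜ, (if i ∈ insert j A then lam j else 0) = lam j := by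
      intro j _; rw [if_pos (Finset.mem_insert_of_mem hi)]
    have f2 : (∑ j ∈ A, if i ∈ A.erase j then r j A - lam j else 0)
        = (∑ j ∈ A, (r j A - lam j)) - (r i A - lam i) := by
      rw [← Finset.sum_erase_add A _ hi]
      have : (if i ∈ A.erase i then r i A - lam i else 0) = 0 := by
        rw [if_neg (Finset.notMem_erase i A)]
      rw [this, add_zero]
      rw [Finset.sum_congr rfl (fun j hj => if_pos (Finset.mem_erase.mpr
        ⟨Ne.symm (Finset.mem_erase.mp hj).1, hi⟩))]
      conv_rhs => rw [← Finset.sum_erase_add A _ hi]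
      ring
    rw [Finset.sum_congr rfl f1, f2, if_pos hi, if_pos hi]
    ring
  · have f1 : (∑ j ∈ Aᶜ, if i ∈ insert j A then lam j else 0)
        = ∑ j ∈ Aᶜ, if j = i then lam j else 0 := by
      refine Finset.sum_congr rfl fun j _ => ?_
      by_cases hji : j = i
      · subst hji; simp
      · rw [if_neg, if_neg hji]
        intro hmem
        rcases Finset.mem_insert.mp hmem with h | h
        · exact hji h.symm
        · exact hi h
    have f2 : ∀ j ∈ A, (if i ∈ A.erase j then r j A - lam j else 0) = 0 := by
      intro j _
      rw [if_neg (fun hmem => hi (Finset.mem_of_mem_erase hmem))]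
    rw [f1, Finset.sum_ite_eq' Aᶜ i (fun j => lam j), if_pos (Finset.mem_compl.mpr hi),
      Finset.sum_congr rfl f2, if_neg hi, if_neg hi]
    simp

lemma balance {n : ℕ} (lam : Fin n → ℝ) (r : Fin n → Finset (Fin n) → ℝ)
    (p : Finset (Fin n) → ℝ) (hp : IsStationaryLumped lam r p) (i : Fin n) :
    ∑ A ∈ univ.filter (fun A : Finset (Fin n) => i ∈ A), p A * r i A = lam i := by
  classical
  have h0 : ∑ B ∈ univ.filter (fun B : Finset (Fin n) => i ∈ B),
      ∑ A : Finset (Fin n), p A * Qhat lam r A B = 0 :=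
    Finset.sum_eq_zero fun B _ => hp.2.2 B
  rw [Finset.sum_comm] at h0
  have h0' : ∑ A : Finset (Fin n),
      p A * (if i ∈ A then -(r i A - lam i) else lam i) = 0 := by
    rw [← h0]
    exact Finset.sum_congr rfl fun A _ => by rw [← Finset.mul_sum, qhat_cut]
  have hsplit := Finset.sum_filter_add_sum_filter_not Finset.univ
    (fun A : Finset (Fin n) => i ∈ A)
    (fun A => p A * (if i ∈ A then -(r i A - lam i) else lam i))
  rw [← hsplit] at h0'
  have e1 : ∑ A ∈ univ.filter (fun A : Finset (Fin n) => i ∈ A),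
      p A * (if i ∈ A then -(r i A - lam i) else lam i)
      = - ∑ A ∈ univ.filter (fun A : Finset (Fin n) => i ∈ A), p A * (r i A - lam i) := by
    rw [← Finset.sum_neg_distrib]
    exact Finset.sum_congr rfl fun A hA => by
      rw [if_pos (Finset.mem_filter.mp hA).2]; ring
  have e2 : ∑ A ∈ univ.filter (fun A : Finset (Fin n) => ¬ i ∈ A),
      p A * (if i ∈ A then -(r i A - lam i) else lam i)
      = (∑ A ∈ univ.filter (fun A : Finset (Fin n) => ¬ i ∈ A), p A) * lam i := by
    rw [Finset.sum_mul]
    exact Finset.sum_congr rfl fun A hA => by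
      rw [if_neg (Finset.mem_filter.mp hA).2]
  rw [e1, e2] at h0'
  have htot := Finset.sum_filter_add_sum_filter_not Finset.univ
    (fun A : Finset (Fin n) => i ∈ A) p
  rw [hp.2.1] at htot
  have hsub : ∑ A ∈ univ.filter (fun A : Finset (Fin n) => i ∈ A), p A * (r i A - lam i)
      = (∑ A ∈ univ.filter (fun A : Finset (Fin n) => i ∈ A), p A * r i A)
        - (∑ A ∈ univ.filter (fun A : Finset (Fin n) => i ∈ A), p A) * lam i := by
    rw [Finset.sum_mul, ← Finset.sum_sub_distrib]
    exact Finset.sum_congr rfl fun A _ => by ring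
  rw [hsub] at h0'
  have hmul : (∑ A ∈ univ.filter (fun A : Finset (Fin n) => i ∈ A), p A) * lam i
      + (∑ A ∈ univ.filter (fun A : Finset (Fin n) => ¬ i ∈ A), p A) * lam i = lam i := by
    rw [← add_mul, htot, one_mul]
  linarith

/-- the refined delay approximation dominates the Jensen bound
`t'_i = 1/(Σ_{A ∋ i} p(A) (r_{i,A}/λ_i) r_{i,A} − λ_i)`. -/
theorem refined_approx_jensen_bound {n : ℕ} (hn : 1 ≤ n)
    (lam : Fin n → ℝ) (hlam : ∀ i, 0 < lam i)
    (r : Fin n → Finset (Fin n) → ℝ)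
    (hr_pos : ∀ (i : Fin n) (A : Finset (Fin n)), i ∈ A → 0 < r i A)
    (hr_mono : ∀ (i : Fin n) (A B : Finset (Fin n)), i ∈ A → A ⊆ B → r i B ≤ r i A)
    (hstab : ∀ i, lam i < r i Finset.univ)
    (p : Finset (Fin n) → ℝ) (hp : IsStationaryLumped lam r p) :
    ∀ i : Fin n,
      1 / ((∑ A ∈ Finset.univ.filter (fun A : Finset (Fin n) => i ∈ A),
          p A * (r i A / lam i) * r i A) - lam i) ≤ tApprox lam r p i := by
  intro i
  classical
  set S := Finset.univ.filter (fun A : Finset (Fin n) => i ∈ A) with hS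
  have hlam' : (0:ℝ) < lam i := hlam i
  have hd : ∀ A ∈ S, 0 < r i A - lam i := by
    intro A hA
    have hiA : i ∈ A := (Finset.mem_filter.mp hA).2
    have := hr_mono i A Finset.univ hiA (Finset.subset_univ A)
    linarith [hstab i]
  have hpn : ∀ A, 0 ≤ p A := fun A => (hp.1 A).1
  have hsum : ∑ A ∈ S, p A * r i A = lam i := balance lam r p hp i
  -- Cauchy-Schwarz
  have CS := Finset.sum_sq_le_sum_mul_sum_of_sq_eq_mul S
    (r := fun A => p A * r i A / lam i)
    (f := fun A => p A * r i A / ((r i A - lam i) * lam i))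
    (g := fun A => p A * (r i A / lam i) * r i A - p A * r i A)
    (fun A hA => div_nonneg (mul_nonneg (hpn A)
      (hr_pos i A (Finset.mem_filter.mp hA).2).le)
      (mul_nonneg (hd A hA).le hlam'.le))
    (fun A hA => by
      have : p A * (r i A / lam i) * r i A - p A * r i A
          = p A * r i A * (r i A - lam i) / lam i := by
        field_simp
      show p A * (r i A / lam i) * r i A - p A * r i A ≥ 0
      rw [ge_iff_le, this]
      exact div_nonneg (mul_nonneg (mul_nonneg (hpn A)
        (hr_pos i A (Finset.mem_filter.mp hA).2).le) (hd A hA).le) hlam'.le)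
    (fun A hA => by
      have h1 : r i A - lam i ≠ 0 := ne_of_gt (hd A hA)
      have h2 : lam i ≠ 0 := ne_of_gt hlam'
      field_simp)
  have hone : ∑ A ∈ S, p A * r i A / lam i = 1 := by
    rw [← Finset.sum_div, hsum, div_self (ne_of_gt hlam')]
  have hG : ∑ A ∈ S, (p A * (r i A / lam i) * r i A - p A * r i A)
      = (∑ A ∈ S, p A * (r i A / lam i) * r i A) - lam i := by
    rw [Finset.sum_sub_distrib, hsum]
  rw [hone, one_pow, hG] at CS
  set D := (∑ A ∈ S, p A * (r i A / lam i) * r i A) - lam i with hD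
  have ht0 : 0 ≤ tApprox lam r p i := by
    apply Finset.sum_nonneg
    intro A hA
    exact div_nonneg (mul_nonneg (hpn A) (hr_pos i A (Finset.mem_filter.mp hA).2).le)
      (mul_nonneg (hd A hA).le hlam'.le)
  have hCS : 1 ≤ tApprox lam r p i * D := CS
  have hDpos : 0 < D := by
    by_contra h
    push_neg at h
    nlinarith
  rw [div_le_iff₀ hDpos]
  linarith
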